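/- Let G be a finite group with G' = Z(G) and suppose Z(G) is elementary abelian of exponent p. If every automorphism of G is central, then Aut(G) is an elementary abelian p-group. -/

import Mathlib

open scoped commutatorElement

private lemma aux_left {G : Type*} [Group G] (a c x : G) (hx : ∀ g, x * g = g * x) :
    ⁅a * x, c⁆ = ⁅a, c⁆ := by
  simp only [commutatorElement_def, mul_inv_rev]
  rw [show a * x * c * (x⁻¹ * a⁻¹) * c⁻¹ = a * (x * c) * x⁻¹ * a⁻¹ * c⁻¹ by group, hx c]
  group

private lemma aux_right {G : Type*} [Group G] (a b y : G) (hy : ∀ g, y * g = g * y) :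
    ⁅a, b * y⁆ = ⁅a, b⁆ := by
  simp only [commutatorElement_def, mul_inv_rev]
  rw [show a * (b * y) * a⁻¹ * (y⁻¹ * b⁻¹) = a * b * (y * a⁻¹) * y⁻¹ * b⁻¹ by group, hy a⁻¹]
  group

/-- If `G` is finite with `G' = Z(G)`, `Z(G)` elementary abelian of exponent `p`, and every
automorphism of `G` is central, then `Aut(G)` is an elementary abelian `p`-group. -/
theorem stmt_8 (p : ℕ) (hp : p.Prime) (G : Type*) [Group G] [Finite G]
    (h : commutator G = Subgroup.center G)
    (helem : ∀ z ∈ Subgroup.center G, z ^ p = 1)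
    (hcent : ∀ (φ : MulAut G) (x : G), x⁻¹ * φ x ∈ Subgroup.center G) :
    (∀ φ ψ : MulAut G, φ * ψ = ψ * φ) ∧ ∀ φ : MulAut G, φ ^ p = 1 := by
  -- every central automorphism fixes the center (= commutator subgroup) pointwise
  have key : ∀ (φ : MulAut G) (z : G), z ∈ Subgroup.center G → φ z = z := by
    intro φ z hz
    rw [← h, commutator_eq_closure] at hz
    induction hz using Subgroup.closure_induction with
    | mem w hw =>
      obtain ⟨a, b, rfl⟩ := hw
      have ca := Subgroup.mem_center_iff.mp (hcent φ a)
      have cb := Subgroup.mem_center_iff.mp (hcent φ b)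
      have ea : φ a = a * (a⁻¹ * φ a) := by group
      have eb : φ b = b * (b⁻¹ * φ b) := by group
      have hm : φ ⁅a, b⁆ = ⁅φ a, φ b⁆ := by
        simp [commutatorElement_def, map_mul, map_inv]
      rw [hm, ea, eb, aux_left _ _ _ (fun g => (ca g).symm),
        aux_right _ _ _ (fun g => (cb g).symm)]
    | one => exact map_one φ
    | mul u v _ _ hu hv => rw [map_mul, hu, hv]
    | inv u _ hu => rw [map_inv, hu]
  have pow_eq : ∀ (φ : MulAut G) (n : ℕ) (x : G), (φ ^ n) x = x * (x⁻¹ * φ x) ^ n := by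
    intro φ n
    induction n with
    | zero => intro x; simp
    | succ n ih =>
      intro x
      have hc : (x⁻¹ * φ x) ^ n ∈ Subgroup.center G := pow_mem (hcent φ x) n
      rw [pow_succ', MulAut.mul_apply, ih, map_mul, key φ _ hc]
      rw [show x * ((x⁻¹ * φ x) ^ (n + 1)) = x * ((x⁻¹ * φ x) * (x⁻¹ * φ x) ^ n) by
          rw [pow_succ']
        , ← mul_assoc, ← mul_assoc, mul_inv_cancel, one_mul]
  constructor
  · intro φ ψ
    ext x
    have hψ := hcent ψ x
    have hφ := hcent φ x
    have cψ := Subgroup.mem_center_iff.mp hψ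
    calc (φ * ψ) x = φ (x * (x⁻¹ * ψ x)) := by rw [MulAut.mul_apply]; group
      _ = φ x * (x⁻¹ * ψ x) := by rw [map_mul, key φ _ hψ]
      _ = x * (x⁻¹ * φ x) * (x⁻¹ * ψ x) := by group
      _ = x * ((x⁻¹ * ψ x) * (x⁻¹ * φ x)) := by rw [mul_assoc, cψ]
      _ = ψ x * (x⁻¹ * φ x) := by group
      _ = ψ (x * (x⁻¹ * φ x)) := by rw [map_mul, key ψ _ hφ]
      _ = (ψ * φ) x := by rw [MulAut.mul_apply]; group
  · intro φ
    ext x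
    rw [pow_eq φ p x, helem _ (hcent φ x), mul_one, MulAut.one_apply]
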